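/- The map π sending x ∈ V to the unique point of its W-orbit in the closed Weyl chamber C̄ is 1-Lipschitz: |π(x) - π(y)| ≤ |x - y| for all x, y ∈ V. -/

import Mathlib

open scoped RealInnerProductSpace
open Metric Set

variable {V : Type*} [NormedAddCommGroup V] [InnerProductSpace ℝ V] [FiniteDimensional ℝ V]

/-- Orthogonal reflection in the hyperplane orthogonal to the unit vector `α`. -/
noncomputable def sRefl (α x : V) : V := x - (2 * ⟪α, x⟫) • α

/-- The one-sided reflection `r_α`: identity on `{α·x ≥ 0}`, reflection on `{α·x ≤ 0}`,
given by the concise formula `r_α(x) = x + 2(α·x)⁻ α`. -/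
noncomputable def rRefl (α x : V) : V := x + (2 * max (-⟪α, x⟫) 0) • α

/-- `R` is a reduced root system of unit vectors. -/
def IsRootSystem (R : Finset V) : Prop :=
  (∀ α ∈ R, ‖α‖ = 1) ∧
  (∀ α ∈ R, ∀ t : ℝ, t • α ∈ R → t = 1 ∨ t = -1) ∧
  (∀ α ∈ R, ∀ β ∈ R, sRefl α β ∈ R)

/-- `Rpos` is a positive subsystem of `R`: the roots having positive inner product
against some vector `u` lying on no root hyperplane. -/
def IsPositiveSystem (R Rpos : Finset V) : Prop :=
  ∃ u : V, (∀ β ∈ R, ⟪β, u⟫ ≠ 0) ∧ ∀ β, β ∈ Rpos ↔ β ∈ R ∧ 0 < ⟪β, u⟫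

/-- `S` is the simple system associated with the positive subsystem `Rpos`. -/
def IsSimpleSystem (Rpos S : Finset V) : Prop :=
  S ⊆ Rpos ∧ LinearIndependent ℝ (fun x : (S : Set V) => (x : V)) ∧
  Submodule.span ℝ (S : Set V) = Submodule.span ℝ (Rpos : Set V) ∧
  ∀ β ∈ Rpos, ∃ c : V → ℝ, (∀ α ∈ S, 0 ≤ c α) ∧ β = ∑ α ∈ S, c α • α

/-- The reflection group `W` generated by the reflections `s_α`, `α ∈ R`. -/
noncomputable def weylGroup (R : Finset V) : Subgroup (V ≃ₗᵢ[ℝ] V) :=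
  Subgroup.closure {w : V ≃ₗᵢ[ℝ] V | ∃ α ∈ R, ∀ x, w x = sRefl α x}

/-- The facet associated with a sign pattern `(Ip, I0, Im)` on the positive roots. -/
def facet (Ip I0 Im : Finset V) : Set V :=
  {x | (∀ α ∈ Ip, 0 < ⟪α, x⟫) ∧ (∀ α ∈ I0, ⟪α, x⟫ = 0) ∧ (∀ α ∈ Im, ⟪α, x⟫ < 0)}

/-- `(Ip, I0, Im)` is a partition of the positive system `Rpos`. -/
def IsFacetPartition (Rpos Ip I0 Im : Finset V) : Prop :=
  ((Ip : Set V) ∪ (I0 : Set V) ∪ (Im : Set V) = (Rpos : Set V)) ∧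
  Disjoint (Ip : Set V) (I0 : Set V) ∧ Disjoint (Ip : Set V) (Im : Set V) ∧
  Disjoint (I0 : Set V) (Im : Set V)

/-- The closed positive Weyl chamber. -/
def closedChamber (S : Finset V) : Set V := {x | ∀ α ∈ S, 0 ≤ ⟪α, x⟫}

/-- The face `F_α` of the Weyl chamber, supported by the wall `H_α`. -/
def faceF (S : Finset V) (α : V) : Set V :=
  {x | ⟪α, x⟫ = 0 ∧ ∀ β ∈ S, β ≠ α → 0 < ⟪β, x⟫}

/-! ### Auxiliary development -/

set_option linter.unusedSectionVars false

section Aux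

lemma inner_self_one {α : V} (hα : ‖α‖ = 1) : ⟪α, α⟫ = 1 := by
  rw [real_inner_self_eq_norm_mul_norm, hα]; norm_num

lemma sRefl_inner {α : V} (hα : ‖α‖ = 1) (x y : V) : ⟪sRefl α x, sRefl α y⟫ = ⟪x, y⟫ := by
  simp only [sRefl, inner_sub_left, inner_sub_right, real_inner_smul_left,
    real_inner_smul_right, inner_self_one hα]
  rw [real_inner_comm x α]
  ring

lemma sRefl_sRefl {α : V} (hα : ‖α‖ = 1) (x : V) : sRefl α (sRefl α x) = x := by
  simp only [sRefl, inner_sub_right, real_inner_smul_right, inner_self_one hα]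
  rw [sub_sub, ← add_smul]
  have h : (2 * ⟪α, x⟫ + 2 * (⟪α, x⟫ - 2 * ⟪α, x⟫ * 1)) = 0 := by ring
  rw [h, zero_smul, sub_zero]

lemma sRefl_neg (α x : V) : sRefl (-α) x = sRefl α x := by
  simp [sRefl, inner_neg_left, smul_neg]

lemma sRefl_self {α : V} (hα : ‖α‖ = 1) : sRefl α α = -α := by
  simp only [sRefl, inner_self_one hα]
  rw [mul_one, two_smul]
  abel

lemma sRefl_add (α x y : V) : sRefl α (x + y) = sRefl α x + sRefl α y := by
  simp only [sRefl, inner_add_right]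
  rw [mul_add, add_smul]
  abel

lemma sRefl_smul (α : V) (t : ℝ) (x : V) : sRefl α (t • x) = t • sRefl α x := by
  simp only [sRefl, real_inner_smul_right, smul_sub, smul_smul]
  rw [mul_left_comm]

lemma sRefl_norm {α : V} (hα : ‖α‖ = 1) (x : V) : ‖sRefl α x‖ = ‖x‖ := by
  have := sRefl_inner hα x x
  rw [real_inner_self_eq_norm_mul_norm, real_inner_self_eq_norm_mul_norm] at this
  nlinarith [norm_nonneg (sRefl α x), norm_nonneg x]

/-- The reflection `sRefl α` as a linear isometry equivalence (junk value `refl` if `‖α‖ ≠ 1`). -/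
noncomputable def sIso (α : V) : V ≃ₗᵢ[ℝ] V :=
  if hα : ‖α‖ = 1 then
    { toFun := sRefl α
      invFun := sRefl α
      left_inv := sRefl_sRefl hα
      right_inv := sRefl_sRefl hα
      map_add' := sRefl_add α
      map_smul' := sRefl_smul α
      norm_map' := sRefl_norm hα }
  else LinearIsometryEquiv.refl ℝ V

lemma sIso_apply {α : V} (hα : ‖α‖ = 1) (x : V) : sIso α x = sRefl α x := by
  simp [sIso, hα]

lemma sIso_mul_self (α : V) : sIso α * sIso α = 1 := by
  ext x
  by_cases hα : ‖α‖ = 1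
  · show sIso α (sIso α x) = x
    rw [sIso_apply hα, sIso_apply hα, sRefl_sRefl hα]
  · simp [sIso, hα]

lemma sIso_inv (α : V) : (sIso α)⁻¹ = sIso α :=
  inv_eq_of_mul_eq_one_right (sIso_mul_self α)

/-- Product of the reflections attached to a list of (simple) roots. -/
noncomputable def wordProd (l : List V) : V ≃ₗᵢ[ℝ] V := (l.map sIso).prod

@[simp] lemma wordProd_nil : wordProd ([] : List V) = 1 := rfl

lemma wordProd_cons (γ : V) (t : List V) : wordProd (γ :: t) = sIso γ * wordProd t := by
  simp [wordProd]

lemma wordProd_singleton (α : V) : wordProd [α] = sIso α := by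
  simp [wordProd]

lemma wordProd_append (l₁ l₂ : List V) :
    wordProd (l₁ ++ l₂) = wordProd l₁ * wordProd l₂ := by
  simp [wordProd]

lemma wordProd_mul_reverse (l : List V) : wordProd l * wordProd l.reverse = 1 := by
  induction l with
  | nil => simp
  | cons γ t ih =>
    rw [List.reverse_cons, wordProd_cons, wordProd_append, wordProd_singleton,
      mul_assoc, ← mul_assoc (wordProd t), ih, one_mul, sIso_mul_self]

lemma wordProd_reverse (l : List V) : wordProd l.reverse = (wordProd l)⁻¹ :=
  (inv_eq_of_mul_eq_one_right (wordProd_mul_reverse l)).symm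

lemma sRefl_map (g : V ≃ₗᵢ[ℝ] V) (α x : V) : sRefl (g α) (g x) = g (sRefl α x) := by
  simp only [sRefl, map_sub, map_smul, LinearIsometryEquiv.inner_map_map]

lemma sIso_conj (g : V ≃ₗᵢ[ℝ] V) {α : V} (hα : ‖α‖ = 1) :
    sIso (g α) = g * sIso α * g⁻¹ := by
  have hgα : ‖g α‖ = 1 := by rw [g.norm_map]; exact hα
  ext x
  show sIso (g α) x = g (sIso α (g⁻¹ x))
  rw [sIso_apply hgα, sIso_apply hα, ← sRefl_map]
  congr 1
  show x = g ((g⁻¹ : V ≃ₗᵢ[ℝ] V) x)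
  simp [LinearIsometryEquiv.inv_def]

variable {R Rpos S : Finset V}

lemma Rpos_sub_R (hpos : IsPositiveSystem R Rpos) : Rpos ⊆ R := by
  obtain ⟨u, -, hu⟩ := hpos
  intro β hβ
  exact ((hu β).mp hβ).1

lemma neg_mem_R (hR : IsRootSystem R) {β : V} (hβ : β ∈ R) : -β ∈ R := by
  have := hR.2.2 β hβ β hβ
  rwa [sRefl_self (hR.1 β hβ)] at this

lemma dichot (hR : IsRootSystem R) (hpos : IsPositiveSystem R Rpos) {β : V} (hβ : β ∈ R) :
    β ∈ Rpos ∨ -β ∈ Rpos := by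
  obtain ⟨u, hu0, hu⟩ := hpos
  rcases lt_or_gt_of_ne (hu0 β hβ) with h | h
  · right
    exact (hu (-β)).mpr ⟨neg_mem_R hR hβ, by rw [inner_neg_left]; linarith⟩
  · left
    exact (hu β).mpr ⟨hβ, h⟩

lemma neg_not_pos (hpos : IsPositiveSystem R Rpos) {β : V} (hβ : β ∈ Rpos) : -β ∉ Rpos := by
  obtain ⟨u, hu0, hu⟩ := hpos
  intro h
  have h1 := ((hu β).mp hβ).2
  have h2 := ((hu (-β)).mp h).2
  rw [inner_neg_left] at h2
  linarith

lemma indep_coeffs (hS : IsSimpleSystem Rpos S) (f : V → ℝ)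
    (h : ∑ γ ∈ S, f γ • γ = 0) : ∀ γ ∈ S, f γ = 0 := by
  have li := hS.2.1
  rw [Fintype.linearIndependent_iff] at li
  intro γ hγ
  refine li (fun i => f i) ?_ ⟨γ, hγ⟩
  rw [← h]
  exact Finset.sum_coe_sort S (fun γ => f γ • γ)

lemma chamber_inner_nonneg (hS : IsSimpleSystem Rpos S) {β a : V} (hβ : β ∈ Rpos)
    (ha : a ∈ closedChamber S) : 0 ≤ ⟪β, a⟫ := by
  obtain ⟨c, hc0, hcβ⟩ := hS.2.2.2 β hβ
  rw [hcβ, sum_inner]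
  refine Finset.sum_nonneg fun γ hγ => ?_
  rw [real_inner_smul_left]
  exact mul_nonneg (hc0 γ hγ) (ha γ hγ)

lemma simple_refl_pos (hR : IsRootSystem R) (hpos : IsPositiveSystem R Rpos)
    (hS : IsSimpleSystem Rpos S) {α β : V} (hα : α ∈ S) (hβ : β ∈ Rpos) (hne : β ≠ α) :
    sRefl α β ∈ Rpos ∧ sRefl α β ≠ α := by
  classical
  have hαR : α ∈ R := Rpos_sub_R hpos (hS.1 hα)
  have hβR : β ∈ R := Rpos_sub_R hpos hβ
  have hα1 : ‖α‖ = 1 := hR.1 α hαR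
  have hmem : sRefl α β ∈ R := hR.2.2 α hαR β hβR
  have hnegβ : β ≠ -α := by
    intro h
    exact neg_not_pos hpos (hS.1 hα) (by rw [← h]; exact hβ)
  have hpos' : sRefl α β ∈ Rpos := by
    by_contra hnot
    have hneg : -(sRefl α β) ∈ Rpos := (dichot hR hpos hmem).resolve_left hnot
    obtain ⟨c, hc0, hcβ⟩ := hS.2.2.2 β hβ
    obtain ⟨d, hd0, hdδ⟩ := hS.2.2.2 _ hneg
    have key : ∑ γ ∈ S, (c γ + d γ - (if γ = α then 2 * ⟪α, β⟫ else 0)) • γ = 0 := by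
      have e1 : ∑ γ ∈ S, (if γ = α then 2 * ⟪α, β⟫ else 0) • γ = (2 * ⟪α, β⟫) • α := by
        rw [Finset.sum_eq_single_of_mem α hα]
        · rw [if_pos rfl]
        · intro γ hγ hγα
          rw [if_neg hγα, zero_smul]
      have e2 : sRefl α β + -(sRefl α β) = 0 := by abel
      calc ∑ γ ∈ S, (c γ + d γ - (if γ = α then 2 * ⟪α, β⟫ else 0)) • γ
          = (∑ γ ∈ S, c γ • γ) + (∑ γ ∈ S, d γ • γ)
            - ∑ γ ∈ S, (if γ = α then 2 * ⟪α, β⟫ else 0) • γ := by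
            rw [← Finset.sum_add_distrib, ← Finset.sum_sub_distrib]
            congr 1
            ext γ
            rw [sub_smul, add_smul]
        _ = (β - (2 * ⟪α, β⟫) • α) + -(sRefl α β) := by
            rw [e1, ← hcβ, ← hdδ]
            abel
        _ = 0 := by rw [← sRefl]; exact e2
    have hcoeff := indep_coeffs hS _ key
    have hczero : ∀ γ ∈ S, γ ≠ α → c γ = 0 := by
      intro γ hγ hγα
      have h1 := hcoeff γ hγ
      rw [if_neg hγα] at h1
      have := hc0 γ hγ
      have := hd0 γ hγ
      linarith
    have hβα : β = c α • α := by
      rw [hcβ, Finset.sum_eq_single_of_mem α hα]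
      intro γ hγ hγα
      rw [hczero γ hγ hγα, zero_smul]
    have := hR.2.1 α hαR (c α) (by rw [← hβα]; exact hβR)
    rcases this with h1 | h1
    · exact hne (by rw [hβα, h1, one_smul])
    · refine hnegβ ?_
      rw [hβα, h1, neg_one_smul]
  refine ⟨hpos', fun h => ?_⟩
  have hh : sRefl α (sRefl α β) = sRefl α α := by rw [h]
  rw [sRefl_sRefl hα1, sRefl_self hα1] at hh
  exact hnegβ hh

lemma wordProd_mem (hR : IsRootSystem R) {l : List V} (hl : ∀ γ ∈ l, γ ∈ R) {β : V}
    (hβ : β ∈ R) : wordProd l β ∈ R := by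
  induction l with
  | nil => simpa using hβ
  | cons γ t ih =>
    have hγ := hl γ (by simp)
    have ht : ∀ x ∈ t, x ∈ R := fun x hx => hl x (by simp [hx])
    rw [wordProd_cons]
    show sIso γ (wordProd t β) ∈ R
    rw [sIso_apply (hR.1 γ hγ)]
    exact hR.2.2 γ hγ _ (ih ht)

lemma pos_root_word (hR : IsRootSystem R) (hpos : IsPositiveSystem R Rpos)
    (hS : IsSimpleSystem Rpos S) :
    ∀ β ∈ Rpos, ∃ l : List V, (∀ γ ∈ l, γ ∈ S) ∧ ∃ α ∈ S, β = wordProd l α := by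
  classical
  have li : LinearIndepOn ℝ id (S : Set V) := hS.2.1
  set B := Module.Basis.extend li with hB
  have hsub : (S : Set V) ⊆ li.extend (Set.subset_univ _) := li.subset_extend _
  set lam : V →ₗ[ℝ] ℝ := B.sumCoords with hlamdef
  have hlam : ∀ δ ∈ S, lam δ = 1 := by
    intro δ hδ
    have hδm : δ ∈ li.extend (Set.subset_univ _) := hsub (Finset.mem_coe.mpr hδ)
    have hBδ : B ⟨δ, hδm⟩ = δ := Module.Basis.extend_apply_self li _
    have h0 := Module.Basis.sumCoords_self_apply B ⟨δ, hδm⟩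
    rw [hBδ] at h0
    exact h0
  have hlampos : ∀ β ∈ Rpos, 0 < lam β := by
    intro β hβ
    obtain ⟨c, hc0, hcβ⟩ := hS.2.2.2 β hβ
    have hβ0 : β ≠ 0 := by
      intro h
      have := hR.1 β (Rpos_sub_R hpos hβ)
      rw [h, norm_zero] at this
      norm_num at this
    have hlamsum : lam β = ∑ γ ∈ S, c γ := by
      rw [hcβ, map_sum]
      exact Finset.sum_congr rfl fun γ hγ => by
        rw [map_smul, hlam γ hγ, smul_eq_mul, mul_one]
    have hnn : 0 ≤ ∑ γ ∈ S, c γ := Finset.sum_nonneg hc0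
    rcases hnn.lt_or_eq with h | h
    · rw [hlamsum]; exact h
    · exfalso
      apply hβ0
      rw [hcβ]
      refine Finset.sum_eq_zero fun γ hγ => ?_
      rw [(Finset.sum_eq_zero_iff_of_nonneg hc0).mp h.symm γ hγ, zero_smul]
  suffices H : ∀ n : ℕ, ∀ β ∈ Rpos, (Rpos.filter fun γ => lam γ < lam β).card = n →
      ∃ l : List V, (∀ γ ∈ l, γ ∈ S) ∧ ∃ α ∈ S, β = wordProd l α by
    intro β hβ
    exact H _ β hβ rfl
  intro n
  induction n using Nat.strong_induction_on with
  | _ n ih =>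
    intro β hβ hcard
    by_cases hβS : β ∈ S
    · exact ⟨[], by simp, β, hβS, rfl⟩
    · have hβR : β ∈ R := Rpos_sub_R hpos hβ
      obtain ⟨c, hc0, hcβ⟩ := hS.2.2.2 β hβ
      have hex : ∃ α ∈ S, 0 < ⟪α, β⟫ := by
        by_contra hcon
        push_neg at hcon
        have h1 : (0:ℝ) < ⟪β, β⟫ := by rw [inner_self_one (hR.1 β hβR)]; norm_num
        have h2 : ⟪β, β⟫ ≤ 0 := by
          nth_rewrite 1 [hcβ]
          rw [sum_inner]
          refine Finset.sum_nonpos fun γ hγ => ?_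
          rw [real_inner_smul_left]
          exact mul_nonpos_iff.mpr (Or.inl ⟨hc0 γ hγ, hcon γ hγ⟩)
        linarith
      obtain ⟨α, hαS, hαβ⟩ := hex
      have hne : β ≠ α := fun h => hβS (h ▸ hαS)
      obtain ⟨hpos', -⟩ := simple_refl_pos hR hpos hS hαS hβ hne
      have hα1 : ‖α‖ = 1 := hR.1 α (Rpos_sub_R hpos (hS.1 hαS))
      have hlt : lam (sRefl α β) < lam β := by
        show lam (β - (2 * ⟪α, β⟫) • α) < lam β
        rw [map_sub, map_smul, hlam α hαS, smul_eq_mul, mul_one]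
        linarith
      have hcardlt : (Rpos.filter fun γ => lam γ < lam (sRefl α β)).card < n := by
        rw [← hcard]
        apply Finset.card_lt_card
        constructor
        · intro γ hγ
          rw [Finset.mem_filter] at hγ ⊢
          exact ⟨hγ.1, lt_trans hγ.2 hlt⟩
        · intro hcon
          have h1 : sRefl α β ∈ Rpos.filter fun γ => lam γ < lam β :=
            Finset.mem_filter.mpr ⟨hpos', hlt⟩
          have h2 := hcon h1
          rw [Finset.mem_filter] at h2
          exact lt_irrefl _ h2.2
      obtain ⟨l, hlS, α', hα'S, hword⟩ := ih _ hcardlt (sRefl α β) hpos' rfl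
      refine ⟨α :: l, ?_, α', hα'S, ?_⟩
      · intro x hx
        rcases List.mem_cons.mp hx with h | h
        · rw [h]; exact hαS
        · exact hlS x h
      · rw [wordProd_cons]
        show β = sIso α (wordProd l α')
        rw [sIso_apply hα1, ← hword]
        exact (sRefl_sRefl hα1 β).symm

lemma deletion (hR : IsRootSystem R) (hpos : IsPositiveSystem R Rpos)
    (hS : IsSimpleSystem Rpos S) :
    ∀ (l : List V), (∀ γ ∈ l, γ ∈ S) → ∀ α ∈ S, wordProd l α ∉ Rpos →
      ∃ l', (∀ γ ∈ l', γ ∈ S) ∧ l'.length + 1 = l.length ∧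
        wordProd l * sIso α = wordProd l' := by
  intro l
  induction l with
  | nil =>
    intro _ α hα hnot
    exact absurd (by simpa [wordProd] using hS.1 hα) hnot
  | cons γ t ih =>
    intro hl α hα hnot
    have hγS : γ ∈ S := hl γ (by simp)
    have htS : ∀ x ∈ t, x ∈ S := fun x hx => hl x (by simp [hx])
    have hγ1 : ‖γ‖ = 1 := hR.1 γ (Rpos_sub_R hpos (hS.1 hγS))
    have hα1 : ‖α‖ = 1 := hR.1 α (Rpos_sub_R hpos (hS.1 hα))
    by_cases hδ : wordProd t α ∈ Rpos
    · have hcons : wordProd (γ :: t) α = sRefl γ (wordProd t α) := by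
        rw [wordProd_cons]
        exact sIso_apply hγ1 _
      have hδγ : wordProd t α = γ := by
        by_contra hne
        exact hnot (hcons ▸ (simple_refl_pos hR hpos hS hγS hδ hne).1)
      refine ⟨t, htS, by simp, ?_⟩
      have hconj : sIso γ = wordProd t * sIso α * (wordProd t)⁻¹ := by
        rw [← hδγ]
        exact sIso_conj (wordProd t) hα1
      rw [wordProd_cons, hconj, mul_assoc (wordProd t * sIso α) (wordProd t)⁻¹ (wordProd t),
        inv_mul_cancel, mul_one, mul_assoc, sIso_mul_self, mul_one]
    · obtain ⟨t', ht'S, hlen, heq⟩ := ih htS α hα hδ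
      refine ⟨γ :: t', ?_, by simp [← hlen], ?_⟩
      · intro x hx
        rcases List.mem_cons.mp hx with h | h
        · rw [h]; exact hγS
        · exact ht'S x h
      · rw [wordProd_cons, wordProd_cons, mul_assoc, heq]

lemma key_ineq (hR : IsRootSystem R) (hpos : IsPositiveSystem R Rpos)
    (hS : IsSimpleSystem Rpos S) :
    ∀ (n : ℕ) (l : List V), l.length ≤ n → (∀ γ ∈ l, γ ∈ S) →
      ∀ a ∈ closedChamber S, ∀ c ∈ closedChamber S, ⟪a, wordProd l c⟫ ≤ ⟪a, c⟫ := by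
  intro n
  induction n with
  | zero =>
    intro l hlen _ a _ c _
    have : l = [] := List.length_eq_zero_iff.mp (Nat.le_zero.mp hlen)
    subst this
    simp
  | succ n ih =>
    intro l hlen hl a ha c hc
    rcases List.eq_nil_or_concat l with rfl | ⟨l', α, rfl⟩
    · simp
    · simp only [List.concat_eq_append] at hlen hl ⊢
      have hαS : α ∈ S := hl α (by simp)
      have hl'S : ∀ γ ∈ l', γ ∈ S := fun γ h => hl γ (by simp [h])
      have hα1 : ‖α‖ = 1 := hR.1 α (Rpos_sub_R hpos (hS.1 hαS))
      have hlen' : l'.length ≤ n := by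
        have := hlen
        simp only [List.length_append, List.length_singleton] at this
        omega
      have hsplit : wordProd (l' ++ [α]) c
          = wordProd l' c - (2 * ⟪α, c⟫) • wordProd l' α := by
        rw [wordProd_append, wordProd_singleton]
        show wordProd l' (sIso α c) = _
        rw [sIso_apply hα1]
        show wordProd l' (c - (2 * ⟪α, c⟫) • α) = _
        rw [map_sub, map_smul]
      by_cases hsign : 0 ≤ ⟪a, wordProd l' α⟫
      · have h2 : ⟪a, wordProd (l' ++ [α]) c⟫
            = ⟪a, wordProd l' c⟫ - 2 * ⟪α, c⟫ * ⟪a, wordProd l' α⟫ := by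
          rw [hsplit, inner_sub_right, real_inner_smul_right]
        have h3 : 0 ≤ 2 * ⟪α, c⟫ * ⟪a, wordProd l' α⟫ :=
          mul_nonneg (by linarith [hc α hαS]) hsign
        have h4 := ih l' hlen' hl'S a ha c hc
        linarith
      · push_neg at hsign
        have hroot : wordProd l' α ∈ R :=
          wordProd_mem hR (fun γ h => Rpos_sub_R hpos (hS.1 (hl'S γ h)))
            (Rpos_sub_R hpos (hS.1 hαS))
        have hnotpos : wordProd l' α ∉ Rpos := by
          intro h
          have := chamber_inner_nonneg hS h ha
          rw [real_inner_comm] at this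
          linarith
        obtain ⟨l'', hl''S, hlen'', heq⟩ := deletion hR hpos hS l' hl'S α hαS hnotpos
        have hrw : wordProd (l' ++ [α]) = wordProd l'' := by
          rw [wordProd_append, wordProd_singleton]
          exact heq
        rw [hrw]
        refine ih l'' ?_ hl''S a ha c hc
        have h5 : l''.length + 1 = l'.length := hlen''
        have h6 : l'.length ≤ n := hlen'
        omega

lemma weyl_word (hR : IsRootSystem R) (hpos : IsPositiveSystem R Rpos)
    (hS : IsSimpleSystem Rpos S) {g : V ≃ₗᵢ[ℝ] V} (hg : g ∈ weylGroup R) :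
    ∃ l : List V, (∀ γ ∈ l, γ ∈ S) ∧ g = wordProd l := by
  induction hg using Subgroup.closure_induction with
  | mem w hw =>
    obtain ⟨β, hβ, hwβ⟩ := hw
    have hβ1 : ‖β‖ = 1 := hR.1 β hβ
    obtain ⟨β', hβ'pos, hsame⟩ : ∃ β', β' ∈ Rpos ∧ ∀ x, sRefl β' x = sRefl β x := by
      rcases dichot hR hpos hβ with hb | hb
      · exact ⟨β, hb, fun x => rfl⟩
      · exact ⟨-β, hb, fun x => sRefl_neg β x⟩
    have hβ'1 : ‖β'‖ = 1 := hR.1 β' (Rpos_sub_R hpos hβ'pos)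
    obtain ⟨l₀, hl₀S, α, hαS, hword⟩ := pos_root_word hR hpos hS β' hβ'pos
    have hα1 : ‖α‖ = 1 := hR.1 α (Rpos_sub_R hpos (hS.1 hαS))
    refine ⟨l₀ ++ [α] ++ l₀.reverse, ?_, ?_⟩
    · intro x hx
      simp only [List.mem_append, List.mem_reverse, List.mem_singleton] at hx
      rcases hx with (h | h) | h
      · exact hl₀S x h
      · rw [h]; exact hαS
      · exact hl₀S x h
    · have hw' : w = sIso β' := by
        ext x
        rw [hwβ x, ← hsame x, sIso_apply hβ'1]
      rw [hw', hword, sIso_conj (wordProd l₀) hα1, wordProd_append, wordProd_append,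
        wordProd_singleton, wordProd_reverse]
  | one => exact ⟨[], by simp, rfl⟩
  | mul x y hx hy ihx ihy =>
    obtain ⟨l₁, hl₁, rfl⟩ := ihx
    obtain ⟨l₂, hl₂, rfl⟩ := ihy
    refine ⟨l₁ ++ l₂, ?_, (wordProd_append l₁ l₂).symm⟩
    intro γ hγ
    rcases List.mem_append.mp hγ with h | h
    · exact hl₁ γ h
    · exact hl₂ γ h
  | inv x hx ihx =>
    obtain ⟨l, hl, rfl⟩ := ihx
    exact ⟨l.reverse, fun γ hγ => hl γ (List.mem_reverse.mp hγ), (wordProd_reverse l).symm⟩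

end Aux

/-- the map `π` sending `x` to the unique point of its `W`-orbit in
the closed Weyl chamber is 1-Lipschitz. -/
theorem projection_lipschitz (R Rpos S : Finset V) (hR : IsRootSystem R)
    (hpos : IsPositiveSystem R Rpos) (hS : IsSimpleSystem Rpos S)
    (pi : V → V)
    (hpi : ∀ x : V, pi x ∈ closedChamber S ∧ ∃ w ∈ weylGroup R, w x = pi x) :
    ∀ x y : V, ‖pi x - pi y‖ ≤ ‖x - y‖ := by
  intro x y
  obtain ⟨hcx, wx, hwx, hwxx⟩ := hpi x
  obtain ⟨hcy, wy, hwy, hwyy⟩ := hpi y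
  have hg : wx * wy⁻¹ ∈ weylGroup R := mul_mem hwx (inv_mem hwy)
  obtain ⟨l, hlS, hgw⟩ := weyl_word hR hpos hS hg
  have h1 : (wx * wy⁻¹) (pi y) = wx y := by
    show wx ((wy⁻¹ : V ≃ₗᵢ[ℝ] V) (pi y)) = wx y
    congr 1
    rw [← hwyy]
    show wy.symm (wy y) = y
    exact wy.symm_apply_apply y
  have hkey : ⟪pi x, wx y⟫ ≤ ⟪pi x, pi y⟫ := by
    rw [← h1, hgw]
    exact key_ineq hR hpos hS l.length l le_rfl hlS (pi x) hcx (pi y) hcy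
  have e1 : ‖pi x‖ = ‖x‖ := by rw [← hwxx, wx.norm_map]
  have e2 : ‖pi y‖ = ‖y‖ := by rw [← hwyy, wy.norm_map]
  have e3 : ‖x - y‖ = ‖wx x - wx y‖ := by rw [← map_sub, wx.norm_map]
  have expand1 : ‖pi x - pi y‖ ^ 2 = ‖x‖ ^ 2 - 2 * ⟪pi x, pi y⟫ + ‖y‖ ^ 2 := by
    rw [norm_sub_sq_real, e1, e2]
  have expand2 : ‖x - y‖ ^ 2 = ‖x‖ ^ 2 - 2 * ⟪pi x, wx y⟫ + ‖y‖ ^ 2 := by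
    rw [e3, norm_sub_sq_real, hwxx, e1, ← e2, ← hwyy, wy.norm_map, wx.norm_map]
  nlinarith [norm_nonneg (pi x - pi y), norm_nonneg (x - y), hkey]
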